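/- Let A_0, A_1 ∈ SL(2,Z) be matrices with all entries positive. Then there exist constants 1 < λ ≤ Λ and C_0 ≥ 1 such that for every n ∈ N, every sequence (i_1, …, i_n) ∈ {0,1}^n, and every vector v ∈ R^2 with v_1 v_2 ≥ 0: C_0^{-1} λ^n ‖v‖ ≤ ‖A_{i_1} ⋯ A_{i_n} v‖ ≤ C_0 Λ^n ‖v‖. -/

import Mathlib

open Matrix

noncomputable def eucNorm2 (v : Fin 2 → ℝ) : ℝ := Real.sqrt (v 0 ^ 2 + v 1 ^ 2)

lemma eucNorm2_neg (v : Fin 2 → ℝ) : eucNorm2 (-v) = eucNorm2 v := by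
  simp [eucNorm2]

lemma eucNorm2_le_sum (v : Fin 2 → ℝ) (h0 : 0 ≤ v 0) (h1 : 0 ≤ v 1) :
    eucNorm2 v ≤ v 0 + v 1 := by
  have h : eucNorm2 v ≤ Real.sqrt ((v 0 + v 1) ^ 2) :=
    Real.sqrt_le_sqrt (by nlinarith)
  rwa [Real.sqrt_sq (by linarith)] at h

lemma sum_le_two_eucNorm2 (v : Fin 2 → ℝ) (h0 : 0 ≤ v 0) (h1 : 0 ≤ v 1) :
    v 0 + v 1 ≤ 2 * eucNorm2 v := by
  have a0 : v 0 ≤ eucNorm2 v := by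
    have h : Real.sqrt ((v 0) ^ 2) ≤ eucNorm2 v := Real.sqrt_le_sqrt (by nlinarith)
    rwa [Real.sqrt_sq h0] at h
  have a1 : v 1 ≤ eucNorm2 v := by
    have h : Real.sqrt ((v 1) ^ 2) ≤ eucNorm2 v := Real.sqrt_le_sqrt (by nlinarith)
    rwa [Real.sqrt_sq h1] at h
  linarith

lemma keylem (M : ℝ) (hM : 1 ≤ M) (L : List (Matrix (Fin 2) (Fin 2) ℝ))
    (hL : ∀ B ∈ L, ∀ r s, 1 ≤ B r s ∧ B r s ≤ M)
    (v : Fin 2 → ℝ) (h0 : 0 ≤ v 0) (h1 : 0 ≤ v 1) :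
    0 ≤ (L.prod.mulVec v) 0 ∧ 0 ≤ (L.prod.mulVec v) 1 ∧
    2 ^ L.length * (v 0 + v 1) ≤ (L.prod.mulVec v) 0 + (L.prod.mulVec v) 1 ∧
    (L.prod.mulVec v) 0 + (L.prod.mulVec v) 1 ≤ (2 * M) ^ L.length * (v 0 + v 1) := by
  induction L with
  | nil =>
    simp only [List.prod_nil, Matrix.one_mulVec, List.length_nil, pow_zero, one_mul]
    exact ⟨h0, h1, le_refl _, le_refl _⟩
  | cons B L ih =>
    obtain ⟨hw0, hw1, hlow, hhigh⟩ := ih (fun C hC => hL C (List.mem_cons_of_mem _ hC))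
    set w := L.prod.mulVec v with hw
    have hB := hL B List.mem_cons_self
    have hprod : (B :: L).prod.mulVec v = B.mulVec w := by
      rw [List.prod_cons, ← Matrix.mulVec_mulVec]
    have e0 : (B.mulVec w) 0 = B 0 0 * w 0 + B 0 1 * w 1 := by
      simp [Matrix.mulVec, dotProduct, Fin.sum_univ_two]
    have e1 : (B.mulVec w) 1 = B 1 0 * w 0 + B 1 1 * w 1 := by
      simp [Matrix.mulVec, dotProduct, Fin.sum_univ_two]
    have b00 := hB 0 0; have b01 := hB 0 1; have b10 := hB 1 0; have b11 := hB 1 1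
    have hpow : (0:ℝ) ≤ 2 ^ L.length := by positivity
    have hpow2 : (0:ℝ) ≤ (2 * M) ^ L.length := by positivity
    rw [hprod]
    refine ⟨by rw [e0]; nlinarith, by rw [e1]; nlinarith, ?_, ?_⟩
    · rw [e0, e1, List.length_cons, pow_succ]
      nlinarith
    · rw [e0, e1, List.length_cons, pow_succ]
      nlinarith

theorem stmt5 (A : Fin 2 → Matrix (Fin 2) (Fin 2) ℤ)
    (hdet : ∀ i, (A i).det = 1)
    (hpos : ∀ i r s, 0 < (A i) r s) :
    ∃ lam Lam C0 : ℝ, 1 < lam ∧ lam ≤ Lam ∧ 1 ≤ C0 ∧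
      ∀ (n : ℕ) (idx : Fin n → Fin 2) (v : Fin 2 → ℝ), 0 ≤ v 0 * v 1 →
        C0⁻¹ * lam ^ n * eucNorm2 v
            ≤ eucNorm2 (((List.ofFn fun j => (A (idx j)).map
                (fun z : ℤ => (z : ℝ))).prod).mulVec v) ∧
        eucNorm2 (((List.ofFn fun j => (A (idx j)).map
                (fun z : ℤ => (z : ℝ))).prod).mulVec v)
            ≤ C0 * Lam ^ n * eucNorm2 v := by
  set Mz : ℤ := ∑ i : Fin 2, ∑ r : Fin 2, ∑ s : Fin 2, A i r s with hMz
  have hMzb : ∀ i r s, A i r s ≤ Mz := by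
    intro i r s
    have h1 : A i r s ≤ ∑ s' : Fin 2, A i r s' :=
      Finset.single_le_sum (fun s' _ => (hpos i r s').le) (Finset.mem_univ s)
    have h2 : (∑ s' : Fin 2, A i r s') ≤ ∑ r' : Fin 2, ∑ s' : Fin 2, A i r' s' :=
      Finset.single_le_sum
        (fun r' _ => Finset.sum_nonneg fun s' _ => (hpos i r' s').le) (Finset.mem_univ r)
    have h3 : (∑ r' : Fin 2, ∑ s' : Fin 2, A i r' s') ≤ Mz :=
      Finset.single_le_sum
        (fun i' _ => Finset.sum_nonneg fun r' _ =>
          Finset.sum_nonneg fun s' _ => (hpos i' r' s').le) (Finset.mem_univ i)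
    linarith
  set M : ℝ := (Mz : ℝ) with hMdef
  have hM : 1 ≤ M := by
    have h1 : (1:ℤ) ≤ Mz := le_trans (hpos 0 0 0) (hMzb 0 0 0)
    rw [hMdef]; exact_mod_cast h1
  refine ⟨2, 2 * M, 2, by norm_num, by linarith, by norm_num, ?_⟩
  intro n idx v hv
  set L : List (Matrix (Fin 2) (Fin 2) ℝ) :=
    List.ofFn (fun j => (A (idx j)).map (fun z : ℤ => (z : ℝ))) with hLdef
  have hLlen : L.length = n := by simp [hLdef]
  have hLmem : ∀ B ∈ L, ∀ r s, 1 ≤ B r s ∧ B r s ≤ M := by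
    intro B hB r s
    rw [hLdef, List.mem_ofFn] at hB
    obtain ⟨j, rfl⟩ := hB
    constructor
    · have := hpos (idx j) r s
      simp only [Matrix.map_apply]
      exact_mod_cast this
    · have := hMzb (idx j) r s
      simp only [Matrix.map_apply, hMdef]
      exact_mod_cast this
  have hgen : ∀ u : Fin 2 → ℝ, 0 ≤ u 0 → 0 ≤ u 1 →
      (2:ℝ)⁻¹ * 2 ^ n * eucNorm2 u ≤ eucNorm2 (L.prod.mulVec u) ∧
      eucNorm2 (L.prod.mulVec u) ≤ 2 * (2 * M) ^ n * eucNorm2 u := by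
    intro u h0 h1
    obtain ⟨hw0, hw1, hlow, hhigh⟩ := keylem M hM L hLmem u h0 h1
    rw [hLlen] at hlow hhigh
    set w := L.prod.mulVec u with hw
    have n1 := eucNorm2_le_sum u h0 h1
    have n2 := sum_le_two_eucNorm2 u h0 h1
    have n3 := eucNorm2_le_sum w hw0 hw1
    have n4 := sum_le_two_eucNorm2 w hw0 hw1
    have hp1 : (0:ℝ) < 2 ^ n := by positivity
    have hp2 : (0:ℝ) ≤ (2 * M) ^ n := by positivity
    constructor
    · have e1 : (2:ℝ) ^ n * eucNorm2 u ≤ 2 ^ n * (u 0 + u 1) :=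
        mul_le_mul_of_nonneg_left n1 (le_of_lt hp1)
      nlinarith
    · have e2 : (2 * M) ^ n * (u 0 + u 1) ≤ (2 * M) ^ n * (2 * eucNorm2 u) :=
        mul_le_mul_of_nonneg_left n2 hp2
      nlinarith
  have hcases : (0 ≤ v 0 ∧ 0 ≤ v 1) ∨ (v 0 ≤ 0 ∧ v 1 ≤ 0) := by
    by_cases h0 : 0 ≤ v 0 <;> by_cases h1 : 0 ≤ v 1
    · exact Or.inl ⟨h0, h1⟩
    · exact Or.inr ⟨by nlinarith [lt_of_not_ge h1], le_of_not_ge h1⟩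
    · exact Or.inr ⟨le_of_not_ge h0, by nlinarith [lt_of_not_ge h0]⟩
    · exact Or.inr ⟨le_of_not_ge h0, le_of_not_ge h1⟩
  rcases hcases with ⟨h0, h1⟩ | ⟨h0, h1⟩
  · exact hgen v h0 h1
  · have h0' : 0 ≤ (-v) 0 := by simpa using neg_nonneg.mpr h0
    have h1' : 0 ≤ (-v) 1 := by simpa using neg_nonneg.mpr h1
    have := hgen (-v) h0' h1'
    rwa [Matrix.mulVec_neg, eucNorm2_neg, eucNorm2_neg] at this
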